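/- Let (X,μ) and (Y,ν) be σ-finite measure spaces and let f ∈ L¹(X,μ)⁺, g ∈ L¹(Y,ν)⁺. Then f submajorizes g (i.e., L_f(t) ≥ L_g(t) for all t > 0) if and only if ∫_X (f − t)₊ dμ ≥ ∫_Y (g − t)₊ dν for all t ≥ 0. -/

import Mathlib

open MeasureTheory Set
open scoped ENNReal

/-- The Lorenz curve of `f`, via the variational formula
`L_f(t) = sup { ∫ e·f dμ : e measurable, 0 ≤ e ≤ 1, ∫ e dμ ≤ t }`. -/
noncomputable def LorenzE {X : Type*} [MeasurableSpace X] (μ : Measure X)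
    (f : X → ℝ≥0∞) (t : ℝ) : ℝ≥0∞ :=
  sSup {c : ℝ≥0∞ | ∃ e : X → ℝ≥0∞, Measurable e ∧ (∀ x, e x ≤ 1) ∧
    (∫⁻ x, e x ∂μ) ≤ ENNReal.ofReal t ∧ c = ∫⁻ x, e x * f x ∂μ}

section Aux

variable {Z : Type*} [MeasurableSpace Z] {μ : Measure Z} {f : Z → ℝ≥0∞}

/-- Basic upper bound: `∫ e f ≤ ∫ (f - s) + s·T` for admissible `e`. -/
lemma lemA (hf : Measurable f) {e : Z → ℝ≥0∞} (he : Measurable e)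
    (he1 : ∀ z, e z ≤ 1) {T : ℝ≥0∞} (heT : ∫⁻ z, e z ∂μ ≤ T) (s : ℝ≥0∞) :
    ∫⁻ z, e z * f z ∂μ ≤ (∫⁻ z, f z - s ∂μ) + s * T := by
  have hpt : ∀ z, e z * f z ≤ (f z - s) + s * e z := by
    intro z
    calc e z * f z ≤ e z * ((f z - s) + s) := mul_le_mul_right le_tsub_add _
      _ = e z * (f z - s) + e z * s := by rw [mul_add]
      _ ≤ (f z - s) + s * e z := by
          refine add_le_add ?_ ?_
          · exact mul_le_of_le_one_left zero_le (he1 z)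
          · rw [mul_comm]
  calc ∫⁻ z, e z * f z ∂μ ≤ ∫⁻ z, (f z - s) + s * e z ∂μ := lintegral_mono hpt
    _ = (∫⁻ z, f z - s ∂μ) + s * ∫⁻ z, e z ∂μ := by
        rw [lintegral_add_left (f := fun z => f z - s) (hf.sub measurable_const), lintegral_const_mul s he]
    _ ≤ _ := add_le_add_right (mul_le_mul_right heT s) _

lemma lorenz_le (hf : Measurable f) (s : ℝ≥0∞) (t : ℝ) :
    LorenzE μ f t ≤ (∫⁻ z, f z - s ∂μ) + s * ENNReal.ofReal t := by
  refine sSup_le ?_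
  rintro c ⟨e, he, he1, heT, rfl⟩
  exact lemA hf he he1 heT s

lemma lorenz_le_lintegral (t : ℝ) : LorenzE μ f t ≤ ∫⁻ z, f z ∂μ := by
  refine sSup_le ?_
  rintro c ⟨e, he, he1, heT, rfl⟩
  exact lintegral_mono fun z => mul_le_of_le_one_left zero_le (he1 z)

/-- Key lemma: the infimum in the dual formula is (essentially) attained, giving a
lower bound for the Lorenz curve. -/
lemma lemC (hf : Measurable f) (hfi : ∫⁻ z, f z ∂μ ≠ ∞) {t : ℝ} (ht : 0 < t) :
    ∃ s : ℝ≥0∞, s ≠ ∞ ∧ (∫⁻ z, f z - s ∂μ) + s * ENNReal.ofReal t ≤ LorenzE μ f t := by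
  set T := ENNReal.ofReal t with hTdef
  have hT0 : T ≠ 0 := by
    simp only [hTdef, ne_eq, ENNReal.ofReal_eq_zero, not_le]; exact ht
  have hTtop : T ≠ ∞ := ENNReal.ofReal_ne_top
  set S : Set ℝ≥0∞ := {s | μ {z | s < f z} ≤ T} with hSdef
  -- S contains a finite element
  have hs1mem : (∫⁻ z, f z ∂μ) / T + 1 ∈ S := by
    set s₁ := (∫⁻ z, f z ∂μ) / T + 1 with hs₁
    have hs10 : s₁ ≠ 0 := by
      simp [hs₁]
    have hs1top : s₁ ≠ ∞ := by
      refine ENNReal.add_ne_top.mpr ⟨?_, ENNReal.one_ne_top⟩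
      exact (ENNReal.div_lt_top hfi hT0).ne
    have markov : μ {z | s₁ ≤ f z} ≤ (∫⁻ z, f z ∂μ) / s₁ :=
      meas_ge_le_lintegral_div hf.aemeasurable hs10 hs1top
    have hsub : {z | s₁ < f z} ⊆ {z | s₁ ≤ f z} := Set.setOf_subset_setOf.mpr fun z => le_of_lt
    have hdiv : (∫⁻ z, f z ∂μ) / s₁ ≤ T := by
      rw [ENNReal.div_le_iff hs10 hs1top, hs₁, mul_add, mul_one,
        ENNReal.mul_div_cancel hT0 hTtop]
      exact le_self_add
    exact le_trans (le_trans (measure_mono hsub) markov) hdiv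
  set sstar := sInf S with hsstar
  have hstop : sstar ≠ ∞ := by
    intro h
    have := sInf_le hs1mem
    rw [← hsstar] at this
    rw [h] at this
    have hs1top : (∫⁻ z, f z ∂μ) / T + 1 ≠ ∞ := by
      refine ENNReal.add_ne_top.mpr ⟨?_, ENNReal.one_ne_top⟩
      exact (ENNReal.div_lt_top hfi hT0).ne
    exact hs1top (top_le_iff.mp this)
  have hup : ∀ ⦃s : ℝ≥0∞⦄, sstar < s → μ {z | s < f z} ≤ T := by
    intro s hs
    obtain ⟨s', hs'S, hs's⟩ := sInf_lt_iff.mp hs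
    exact le_trans (measure_mono fun z hz => lt_trans hs's hz) hs'S
  -- μ {f > sstar} ≤ T
  have hmonoA : Monotone (fun n : ℕ => {z | sstar + (n : ℝ≥0∞)⁻¹ < f z}) := by
    intro n m hnm z hz
    simp only [mem_setOf_eq] at hz ⊢
    refine lt_of_le_of_lt (add_le_add_right ?_ _) hz
    exact ENNReal.inv_le_inv.mpr (by exact_mod_cast hnm)
  have ha : μ {z | sstar < f z} ≤ T := by
    have hUnion : {z | sstar < f z} = ⋃ n : ℕ, {z | sstar + (n : ℝ≥0∞)⁻¹ < f z} := by
      ext z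
      simp only [mem_setOf_eq, mem_iUnion]
      constructor
      · intro h
        obtain ⟨r, hr0, hr⟩ := ENNReal.lt_iff_exists_add_pos_lt.mp h
        obtain ⟨n, hn⟩ := ENNReal.exists_inv_nat_lt (by exact_mod_cast hr0.ne' : (r : ℝ≥0∞) ≠ 0)
        exact ⟨n, lt_of_le_of_lt (add_le_add_right hn.le _) hr⟩
      · rintro ⟨n, hn⟩
        exact lt_of_le_of_lt le_self_add hn
    rw [hUnion, Directed.measure_iUnion hmonoA.directed_le]
    refine iSup_le fun n => hup ?_
    refine ENNReal.lt_add_right hstop ?_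
    simp
  rcases eq_or_ne sstar 0 with h0 | h0
  · -- case sstar = 0 : take s = 0 and e = indicator of {f > 0}
    refine ⟨0, (by simp), ?_⟩
    simp only [tsub_zero, zero_mul, add_zero]
    have hmemset : MeasurableSet {z | (0:ℝ≥0∞) < f z} := hf measurableSet_Ioi
    refine le_sSup ⟨({z | (0:ℝ≥0∞) < f z}).indicator (fun _ => 1), ?_, ?_, ?_, ?_⟩
    · exact measurable_const.indicator hmemset
    · intro z
      by_cases hz : z ∈ {z | (0:ℝ≥0∞) < f z} <;> simp [hz]
    · rw [lintegral_indicator_const hmemset, one_mul]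
      rw [h0] at ha
      exact ha
    · refine lintegral_congr fun z => ?_
      rcases eq_or_ne (f z) 0 with hz | hz
      · simp [hz]
      · have : z ∈ {z | (0:ℝ≥0∞) < f z} := pos_iff_ne_zero.mpr hz
        simp [Set.indicator_of_mem this]
  · -- case sstar ≠ 0
    have hspos : 0 < sstar := pos_iff_ne_zero.mpr h0
    set r := sstar.toReal with hrdef
    have hr : 0 < r := ENNReal.toReal_pos h0 hstop
    have hsr : ENNReal.ofReal r = sstar := ENNReal.ofReal_toReal hstop
    -- T ≤ μ {f ≥ sstar}
    have hb : T ≤ μ {z | sstar ≤ f z} := by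
      set B : ℕ → Set Z := fun n => {z | ENNReal.ofReal (r - r / (n + 2)) < f z} with hBdef
      have hBmeas : ∀ n, MeasurableSet (B n) := fun n => hf measurableSet_Ioi
      have hBanti : Antitone B := by
        intro n m hnm z hz
        refine lt_of_le_of_lt (ENNReal.ofReal_le_ofReal ?_) hz
        have h1 : r / (m + 2) ≤ r / (n + 2) := by
          apply div_le_div_of_nonneg_left hr.le (by positivity)
          have := (Nat.cast_le (α := ℝ)).mpr hnm
          linarith
        linarith
      have hBfin : μ (B 0) ≠ ∞ := by
        have hε0 : ENNReal.ofReal (r - r / (((0:ℕ):ℝ) + 2)) ≠ 0 := by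
          rw [ne_eq, ENNReal.ofReal_eq_zero, not_le]
          norm_num
          linarith
        have : μ (B 0) ≤ μ {z | ENNReal.ofReal (r - r / (((0:ℕ):ℝ) + 2)) ≤ f z} :=
          measure_mono (Set.setOf_subset_setOf.mpr fun z => le_of_lt)
        refine ne_top_of_le_ne_top ?_ (this.trans (meas_ge_le_lintegral_div hf.aemeasurable hε0 ENNReal.ofReal_ne_top))
        exact (ENNReal.div_lt_top hfi hε0).ne
      have hTB : ∀ n, T ≤ μ (B n) := by
        intro n
        have hlt : ENNReal.ofReal (r - r / (n + 2)) < sstar := by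
          rw [← hsr]
          refine ENNReal.ofReal_lt_ofReal_iff hr |>.mpr ?_
          have : 0 < r / (n + 2) := by positivity
          linarith
        have hnotmem : ENNReal.ofReal (r - r / (n + 2)) ∉ S := by
          intro hmem
          exact absurd (sInf_le hmem) (not_le.mpr hlt)
        exact le_of_lt (not_le.mp hnotmem)
      have hInter : ⋂ n, B n = {z | sstar ≤ f z} := by
        ext z
        simp only [mem_iInter, mem_setOf_eq, hBdef]
        constructor
        · intro h
          by_contra hlt
          push_neg at hlt
          have hzt : f z ≠ ∞ := (hlt.trans_le le_top).ne
          set u := (f z).toReal with hu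
          have hur : u < r := by
            rw [hu, hrdef]
            exact ENNReal.toReal_lt_toReal hzt hstop |>.mpr hlt
          have hu0 : 0 ≤ u := ENNReal.toReal_nonneg
          obtain ⟨n, hn⟩ := exists_nat_gt (r / (r - u))
          have hru : 0 < r - u := by linarith
          have key : r / (n + 2) < r - u := by
            rw [div_lt_iff₀ (by positivity)]
            have h2 : r / (r - u) < (n : ℝ) + 2 := by linarith
            calc r = r / (r - u) * (r - u) := by field_simp
              _ < ((n : ℝ) + 2) * (r - u) := by
                  exact mul_lt_mul_of_pos_right h2 hru
              _ = (r - u) * ((n : ℝ) + 2) := by ring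
          have hcontra : f z < ENNReal.ofReal (r - r / (n + 2)) := by
            have hfz : f z = ENNReal.ofReal u := (ENNReal.ofReal_toReal hzt).symm
            rw [hfz]
            refine ENNReal.ofReal_lt_ofReal_iff (by linarith) |>.mpr (by linarith)
          exact absurd (h n) (not_lt.mpr hcontra.le)
        · intro h n
          refine lt_of_lt_of_le ?_ h
          rw [← hsr]
          refine ENNReal.ofReal_lt_ofReal_iff hr |>.mpr ?_
          have : 0 < r / (n + 2) := by positivity
          linarith
      have htend := tendsto_measure_iInter_atTop (μ := μ) (fun n => (hBmeas n).nullMeasurableSet)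
        hBanti ⟨0, hBfin⟩
      rw [hInter] at htend
      exact ge_of_tendsto' htend hTB
    -- Construct the optimal e
    set A : Set Z := {z | sstar < f z} with hAdef
    set B : Set Z := {z | f z = sstar} with hBdef
    have hAmeas : MeasurableSet A := hf measurableSet_Ioi
    have hBmeas : MeasurableSet B := hf (measurableSet_singleton sstar)
    have hABdisj : ∀ z, z ∈ A → z ∉ B := by
      intro z hz hz'
      rw [hBdef, mem_setOf_eq] at hz'
      rw [hAdef, mem_setOf_eq, hz'] at hz
      exact lt_irrefl _ hz
    set a := μ A with hadef
    set b := μ B with hbdef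
    have hunion : {z | sstar ≤ f z} = A ∪ B := by
      ext z
      simp only [mem_setOf_eq, mem_union, hAdef, hBdef]
      constructor
      · intro h
        rcases lt_or_eq_of_le h with h' | h'
        · exact Or.inl h'
        · exact Or.inr h'.symm
      · rintro (h | h)
        · exact h.le
        · exact h.ge
    have hab : μ {z | sstar ≤ f z} = a + b := by
      rw [hunion, measure_union _ hBmeas]
      rw [Set.disjoint_left]
      exact hABdisj
    have hb' : T ≤ a + b := hab ▸ hb
    have hatop : a ≠ ∞ := ne_top_of_le_ne_top hTtop ha
    have hbtop : b ≠ ∞ := by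
      have h1 : b ≤ μ {z | sstar ≤ f z} := measure_mono (by rw [hunion]; exact subset_union_right)
      have h2 : μ {z | sstar ≤ f z} ≤ (∫⁻ z, f z ∂μ) / sstar :=
        meas_ge_le_lintegral_div hf.aemeasurable h0 hstop
      refine ne_top_of_le_ne_top ?_ (h1.trans h2)
      exact (ENNReal.div_lt_top hfi h0).ne
    set lam := (T - a) / b with hlamdef
    have hTab : T - a ≤ b := tsub_le_iff_left.mpr hb'
    have hlamb : lam * b = T - a := by
      rcases eq_or_ne b 0 with hb0 | hb0
      · have : T - a = 0 := le_antisymm (hb0 ▸ hTab) zero_le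
        simp [hlamdef, this, hb0]
      · exact ENNReal.div_mul_cancel hb0 hbtop
    have hlam1 : lam ≤ 1 := by
      rcases eq_or_ne b 0 with hb0 | hb0
      · have : T - a = 0 := le_antisymm (hb0 ▸ hTab) zero_le
        simp [hlamdef, this]
      · rw [hlamdef, ENNReal.div_le_iff hb0 hbtop, one_mul]
        exact hTab
    set e : Z → ℝ≥0∞ := fun z => A.indicator (fun _ => 1) z + B.indicator (fun _ => lam) z
      with hedef
    have he_meas : Measurable e :=
      (measurable_const.indicator hAmeas).add (measurable_const.indicator hBmeas)
    have he1 : ∀ z, e z ≤ 1 := by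
      intro z
      rw [hedef]
      by_cases hzA : z ∈ A
      · have hzB : z ∉ B := hABdisj z hzA
        simp [Set.indicator_of_mem hzA, Set.indicator_of_notMem hzB]
      · by_cases hzB : z ∈ B
        · simp [Set.indicator_of_notMem hzA, Set.indicator_of_mem hzB, hlam1]
        · simp [Set.indicator_of_notMem hzA, Set.indicator_of_notMem hzB]
    have heInt : ∫⁻ z, e z ∂μ = T := by
      rw [hedef]
      rw [lintegral_add_left (measurable_const.indicator hAmeas)]
      rw [lintegral_indicator_const hAmeas, lintegral_indicator_const hBmeas, one_mul]
      rw [← hadef, ← hbdef, hlamb]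
      exact add_tsub_cancel_of_le ha
    -- ∫ (f - sstar) = ∫_A (f - sstar)
    have hsubInt : ∫⁻ z, f z - sstar ∂μ = ∫⁻ z in A, f z - sstar ∂μ := by
      rw [← lintegral_indicator hAmeas]
      refine lintegral_congr fun z => ?_
      by_cases hzA : z ∈ A
      · rw [Set.indicator_of_mem hzA]
      · rw [Set.indicator_of_notMem hzA]
        have : f z ≤ sstar := not_lt.mp hzA
        exact tsub_eq_zero_of_le this
    have hAf : ∫⁻ z in A, f z ∂μ = (∫⁻ z, f z - sstar ∂μ) + sstar * a := by
      have hcongr : ∫⁻ z in A, f z ∂μ = ∫⁻ z in A, (f z - sstar) + sstar ∂μ := by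
        refine setLIntegral_congr_fun hAmeas (fun z hz => ?_)
        exact (tsub_add_cancel_of_le (le_of_lt hz)).symm
      rw [hcongr, lintegral_add_right _ measurable_const, setLIntegral_const, ← hsubInt, ← hadef]
    have heIntf : ∫⁻ z, e z * f z ∂μ = (∫⁻ z, f z - sstar ∂μ) + sstar * T := by
      have hpt : ∀ z, e z * f z
          = A.indicator f z + B.indicator (fun _ => lam * sstar) z := by
        intro z
        rw [hedef]
        by_cases hzA : z ∈ A
        · have hzB : z ∉ B := hABdisj z hzA
          simp [Set.indicator_of_mem hzA, Set.indicator_of_notMem hzB]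
        · by_cases hzB : z ∈ B
          · have hfz : f z = sstar := hzB
            simp [Set.indicator_of_notMem hzA, Set.indicator_of_mem hzB, hfz]
          · have hfz : f z ≤ sstar := not_lt.mp hzA
            simp [Set.indicator_of_notMem hzA, Set.indicator_of_notMem hzB]
      calc ∫⁻ z, e z * f z ∂μ
          = ∫⁻ z, A.indicator f z + B.indicator (fun _ => lam * sstar) z ∂μ :=
            lintegral_congr hpt
        _ = (∫⁻ z in A, f z ∂μ) + (lam * sstar) * b := by
            rw [lintegral_add_left (hf.indicator hAmeas), lintegral_indicator hAmeas,
              lintegral_indicator_const hBmeas, ← hbdef]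
        _ = (∫⁻ z, f z - sstar ∂μ) + sstar * a + sstar * (T - a) := by
            rw [hAf]
            congr 1
            rw [mul_comm lam sstar, mul_assoc, hlamb]
        _ = (∫⁻ z, f z - sstar ∂μ) + sstar * T := by
            rw [add_assoc, ← mul_add, add_tsub_cancel_of_le ha]
    refine ⟨sstar, hstop, ?_⟩
    rw [← heIntf]
    exact le_sSup ⟨e, he_meas, he1, heInt.le, rfl⟩

end Aux

/-- `f` submajorizes `g` (Lorenz curves compare: `L_f(t) ≥ L_g(t)` for all `t > 0`)
if and only if `∫ (f − t)₊ dμ ≥ ∫ (g − t)₊ dν` for all `t ≥ 0`. -/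
theorem stmt3 {X Y : Type*} [MeasurableSpace X] [MeasurableSpace Y]
    (μ : Measure X) (ν : Measure Y) [SigmaFinite μ] [SigmaFinite ν]
    (f : X → ℝ≥0∞) (g : Y → ℝ≥0∞) (hf : Measurable f) (hg : Measurable g)
    (hfi : ∫⁻ x, f x ∂μ ≠ ∞) (hgi : ∫⁻ y, g y ∂ν ≠ ∞) :
    (∀ t : ℝ, 0 < t → LorenzE ν g t ≤ LorenzE μ f t) ↔
      (∀ t : ℝ≥0∞, ∫⁻ y, (g y - t) ∂ν ≤ ∫⁻ x, (f x - t) ∂μ) := by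
  constructor
  · -- Lorenz comparison implies integral comparison
    intro hL t
    rcases eq_or_ne t ∞ with rfl | httop
    · simp [ENNReal.sub_top]
    rcases eq_or_ne t 0 with rfl | ht0
    · -- t = 0 : ∫ g ≤ ∫ f via spanning sets
      simp only [tsub_zero]
      have key : ∀ n : ℕ, ∫⁻ y, (spanningSets ν n).indicator g y ∂ν ≤ ∫⁻ x, f x ∂μ := by
        intro n
        set s : ℝ := (ν (spanningSets ν n)).toReal + 1 with hs
        have hs0 : (0:ℝ) < s := by positivity
        have hνs : ν (spanningSets ν n) ≤ ENNReal.ofReal s := by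
          rw [hs, ENNReal.ofReal_add ENNReal.toReal_nonneg zero_le_one,
            ENNReal.ofReal_toReal (measure_spanningSets_lt_top ν n).ne, ENNReal.ofReal_one]
          exact le_self_add
        have mem : (∫⁻ y, (spanningSets ν n).indicator g y ∂ν) ∈
            {c : ℝ≥0∞ | ∃ e : Y → ℝ≥0∞, Measurable e ∧ (∀ y, e y ≤ 1) ∧
              (∫⁻ y, e y ∂ν) ≤ ENNReal.ofReal s ∧ c = ∫⁻ y, e y * g y ∂ν} := by
          refine ⟨(spanningSets ν n).indicator (fun _ => 1),
            measurable_const.indicator (measurableSet_spanningSets ν n), ?_, ?_, ?_⟩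
          · intro y
            by_cases hy : y ∈ spanningSets ν n <;> simp [hy]
          · rw [lintegral_indicator_const (measurableSet_spanningSets ν n), one_mul]
            exact hνs
          · refine lintegral_congr fun y => ?_
            by_cases hy : y ∈ spanningSets ν n <;>
              simp [Set.indicator_of_mem, Set.indicator_of_notMem, hy]
        calc ∫⁻ y, (spanningSets ν n).indicator g y ∂ν ≤ LorenzE ν g s := le_sSup mem
          _ ≤ LorenzE μ f s := hL s hs0
          _ ≤ ∫⁻ x, f x ∂μ := lorenz_le_lintegral s
      have hmono : Monotone fun n : ℕ => (spanningSets ν n).indicator g := by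
        intro n m hnm
        exact Set.indicator_le_indicator_of_subset (monotone_spanningSets ν hnm)
          (fun _ => zero_le)
      calc ∫⁻ y, g y ∂ν = ∫⁻ y, ⨆ n, (spanningSets ν n).indicator g y ∂ν := by
            refine lintegral_congr fun y => ?_
            have hy : y ∈ ⋃ n, spanningSets ν n := by
              rw [iUnion_spanningSets]; trivial
            obtain ⟨n, hn⟩ := mem_iUnion.mp hy
            refine le_antisymm ?_ ?_
            · refine le_iSup_of_le n ?_
              rw [Set.indicator_of_mem hn]
            · refine iSup_le fun m => ?_
              by_cases hm : y ∈ spanningSets ν m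
              · rw [Set.indicator_of_mem hm]
              · rw [Set.indicator_of_notMem hm]; exact zero_le
        _ = ⨆ n, ∫⁻ y, (spanningSets ν n).indicator g y ∂ν :=
            lintegral_iSup (fun n => hg.indicator (measurableSet_spanningSets ν n)) hmono
        _ ≤ ∫⁻ x, f x ∂μ := iSup_le key
    · -- 0 < t < ∞
      set A : Set Y := {y | t < g y} with hAdef
      have hAmeas : MeasurableSet A := hg measurableSet_Ioi
      have hAfin : ν A ≠ ∞ := by
        have h1 : ν A ≤ ν {y | t ≤ g y} := measure_mono (Set.setOf_subset_setOf.mpr fun y => le_of_lt)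
        have h2 : ν {y | t ≤ g y} ≤ (∫⁻ y, g y ∂ν) / t :=
          meas_ge_le_lintegral_div hg.aemeasurable ht0 httop
        refine ne_top_of_le_ne_top ?_ (h1.trans h2)
        exact (ENNReal.div_lt_top hgi ht0).ne
      -- ∫ (g - t) + t * ν A = ∫_A g
      have hgsplit : (∫⁻ y, g y - t ∂ν) + t * ν A = ∫⁻ y in A, g y ∂ν := by
        have h1 : ∫⁻ y, g y - t ∂ν = ∫⁻ y in A, g y - t ∂ν := by
          rw [← lintegral_indicator hAmeas]
          refine lintegral_congr fun y => ?_
          by_cases hy : y ∈ A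
          · rw [Set.indicator_of_mem hy]
          · rw [Set.indicator_of_notMem hy]
            exact tsub_eq_zero_of_le (not_lt.mp hy)
        have h2 : ∫⁻ y in A, g y ∂ν = ∫⁻ y in A, (g y - t) + t ∂ν := by
          refine setLIntegral_congr_fun hAmeas (fun y hy => ?_)
          exact (tsub_add_cancel_of_le (le_of_lt hy)).symm
        rw [h2, lintegral_add_right _ measurable_const, setLIntegral_const, ← h1]
      have hbound : ∀ ε : ℝ, 0 < ε →
          ∫⁻ y, g y - t ∂ν ≤ (∫⁻ x, f x - t ∂μ) + t * ENNReal.ofReal ε := by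
        intro ε hε
        set s : ℝ := (ν A).toReal + ε with hs
        have hs0 : (0:ℝ) < s := by positivity
        have hofs : ENNReal.ofReal s = ν A + ENNReal.ofReal ε := by
          rw [hs, ENNReal.ofReal_add ENNReal.toReal_nonneg hε.le,
            ENNReal.ofReal_toReal hAfin]
        have hνA : ν A ≤ ENNReal.ofReal s := by
          rw [hofs]; exact le_self_add
        have mem : (∫⁻ y in A, g y ∂ν) ∈
            {c : ℝ≥0∞ | ∃ e : Y → ℝ≥0∞, Measurable e ∧ (∀ y, e y ≤ 1) ∧
              (∫⁻ y, e y ∂ν) ≤ ENNReal.ofReal s ∧ c = ∫⁻ y, e y * g y ∂ν} := by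
          refine ⟨A.indicator (fun _ => 1), measurable_const.indicator hAmeas, ?_, ?_, ?_⟩
          · intro y
            by_cases hy : y ∈ A <;> simp [hy]
          · rw [lintegral_indicator_const hAmeas, one_mul]
            exact hνA
          · rw [← lintegral_indicator hAmeas]
            refine lintegral_congr fun y => ?_
            by_cases hy : y ∈ A <;>
              simp [Set.indicator_of_mem, Set.indicator_of_notMem, hy]
        have hchain : (∫⁻ y, g y - t ∂ν) + t * ν A
            ≤ ((∫⁻ x, f x - t ∂μ) + t * ENNReal.ofReal ε) + t * ν A := by
          calc (∫⁻ y, g y - t ∂ν) + t * ν A = ∫⁻ y in A, g y ∂ν := hgsplit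
            _ ≤ LorenzE ν g s := le_sSup mem
            _ ≤ LorenzE μ f s := hL s hs0
            _ ≤ (∫⁻ x, f x - t ∂μ) + t * ENNReal.ofReal s := lorenz_le hf t s
            _ = ((∫⁻ x, f x - t ∂μ) + t * ENNReal.ofReal ε) + t * ν A := by
                rw [hofs, mul_add]; ring
        exact (ENNReal.add_le_add_iff_right (by
          exact ENNReal.mul_ne_top httop hAfin)).mp hchain
      -- take ε → 0
      have hftop : (∫⁻ x, f x - t ∂μ) < ∞ :=
        lt_of_le_of_lt (lintegral_mono fun x => tsub_le_self) hfi.lt_top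
      refine ENNReal.le_of_forall_pos_le_add fun ε hε _ => ?_
      have htR : 0 < t.toReal := ENNReal.toReal_pos ht0 httop
      have hδ : (0:ℝ) < (ε:ℝ) / t.toReal := div_pos (by exact_mod_cast hε) htR
      calc ∫⁻ y, g y - t ∂ν
          ≤ (∫⁻ x, f x - t ∂μ) + t * ENNReal.ofReal ((ε:ℝ) / t.toReal) := hbound _ hδ
        _ = (∫⁻ x, f x - t ∂μ) + ε := by
            rw [ENNReal.ofReal_div_of_pos htR, ENNReal.ofReal_coe_nnreal,
              ENNReal.ofReal_toReal httop, ENNReal.mul_div_cancel ht0 httop]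
  · -- integral comparison implies Lorenz comparison
    intro hI t ht
    obtain ⟨s, _, hs⟩ := lemC hf hfi ht
    refine sSup_le ?_
    rintro c ⟨e, he, he1, heT, rfl⟩
    calc ∫⁻ y, e y * g y ∂ν ≤ (∫⁻ y, g y - s ∂ν) + s * ENNReal.ofReal t :=
          lemA hg he he1 heT s
      _ ≤ (∫⁻ x, f x - s ∂μ) + s * ENNReal.ofReal t := add_le_add_left (hI s) _
      _ ≤ LorenzE μ f t := hs
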